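/- The occurs-check reduction step is valid: if y is universally quantified and y is a rigid subterm of t (i.e., t is built from constants applied to arguments with y occurring along a path through constant heads, and t ≠ y), then the guarded goal ∀ȳ.(Q₁ → ⋯ → y = t → ⋯ → Qₘ → B) is intuitionistically valid, i.e., equivalent to ⊤, because the guard y = t has no unifier treating the universal variables as distinct parameters. -/

import Mathlib

/-- First-order terms: de Bruijn variables (eigenvariables) and
    application of a function symbol (a `Nat` code) to arguments. -/
inductive Tm : Type where
  | var : Nat → Tm
  | app : Nat → List Tm → Tm

namespace Tm

/-- Substitution for variables. -/
def subst (σ : Nat → Tm) : Tm → Tm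
  | var n => σ n
  | app f ts => app f (ts.attach.map (fun t => subst σ t.1))
  decreasing_by have := List.sizeOf_lt_of_mem t.2; simp_wf; omega

/-- All free variables are `< k`. -/
inductive Bv : Nat → Tm → Prop where
  | var : ∀ {k n}, n < k → Bv k (var n)
  | app : ∀ {k f ts}, (∀ t ∈ ts, Bv k t) → Bv k (app f ts)

end Tm

/-- `σ` is a unifier of `s` and `t`. -/
def Unifies (σ : Nat → Tm) (s t : Tm) : Prop := s.subst σ = t.subst σ

/-- `U` is a complete set of unifiers of `s` and `t`. -/
def IsCSU (U : Set (Nat → Tm)) (s t : Tm) : Prop :=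
  (∀ σ ∈ U, Unifies σ s t) ∧
  ∀ θ, Unifies θ s t → ∃ σ ∈ U, ∃ δ, ∀ n, (σ n).subst δ = θ n

/-- Formulas of eqLJω (first-order fragment), with de Bruijn binders. -/
inductive Fm : Type where
  | top | bot
  | atom : Nat → List Tm → Fm
  | eq : Tm → Tm → Fm
  | and : Fm → Fm → Fm
  | imp : Fm → Fm → Fm
  | all : Fm → Fm
  | ex : Fm → Fm

namespace Fm

/-- Lift a substitution under a binder. -/
def up (σ : Nat → Tm) : Nat → Tm
  | 0 => .var 0
  | n + 1 => (σ n).subst (fun k => .var (k + 1))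

/-- Apply a substitution to a formula. -/
def substF (σ : Nat → Tm) : Fm → Fm
  | top => top
  | bot => bot
  | atom p ts => atom p (ts.map (Tm.subst σ))
  | eq s t => eq (s.subst σ) (t.subst σ)
  | and A B => and (A.substF σ) (B.substF σ)
  | imp A B => imp (A.substF σ) (B.substF σ)
  | all A => all (A.substF (up σ))
  | ex A => ex (A.substF (up σ))

/-- Shift all free variables up by one. -/
def shift (A : Fm) : Fm := A.substF (fun n => .var (n + 1))

/-- Instantiate de Bruijn variable 0 with `t`. -/
def subst0 (t : Tm) (A : Fm) : Fm :=
  A.substF (fun n => match n with | 0 => t | n + 1 => .var n)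

/-- All free variables are `< k`. -/
inductive Bv : Nat → Fm → Prop where
  | top : Bv k top
  | bot : Bv k bot
  | atom : (∀ t ∈ ts, Tm.Bv k t) → Bv k (atom p ts)
  | eq : Tm.Bv k s → Tm.Bv k t → Bv k (eq s t)
  | and : Bv k A → Bv k B → Bv k (and A B)
  | imp : Bv k A → Bv k B → Bv k (imp A B)
  | all : Bv (k + 1) A → Bv k (all A)
  | ex : Bv (k + 1) A → Bv k (ex A)

end Fm

/-- The sequent calculus eqLJω: intuitionistic LJ together with the
    rules `=R` (reflexivity on the right) and `=L` (case analysis over a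
    complete set of unifiers on the left). -/
inductive Prv : List Fm → Fm → Prop where
  | init : Fm.atom p ts ∈ Γ → Prv Γ (.atom p ts)
  | topR : Prv Γ .top
  | botL : Fm.bot ∈ Γ → Prv Γ C
  | andR : Prv Γ A → Prv Γ B → Prv Γ (.and A B)
  | andL : Fm.and A B ∈ Γ → Prv (A :: B :: Γ) C → Prv Γ C
  | impR : Prv (A :: Γ) B → Prv Γ (.imp A B)
  | impL : Fm.imp A B ∈ Γ → Prv Γ A → Prv (B :: Γ) C → Prv Γ C
  | allR : Prv (Γ.map Fm.shift) A → Prv Γ (.all A)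
  | allL : Fm.all A ∈ Γ → Prv (A.subst0 t :: Γ) C → Prv Γ C
  | exR : Prv Γ (A.subst0 t) → Prv Γ (.ex A)
  | exL : Fm.ex A ∈ Γ → Prv (A :: Γ.map Fm.shift) C.shift → Prv Γ C
  | eqR : Prv Γ (.eq t t)
  | eqL : Fm.eq s t ∈ Γ → IsCSU U s t →
      (∀ σ ∈ U, Prv (Γ.map (Fm.substF σ)) (C.substF σ)) → Prv Γ C

/-- `s` is an immediate rigid subterm of `t` (argument of a constant head). -/
inductive RSub : Tm → Tm → Prop where
  | mk : ∀ {s f ts}, s ∈ ts → RSub s (.app f ts)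

/-- `s` is a rigid subterm of `t`. -/
def RigidSub (s t : Tm) : Prop := Relation.TransGen RSub s t

/-- Prefix a formula with `m` universal quantifiers. -/
def alls : Nat → Fm → Fm
  | 0, F => F
  | n + 1, F => .all (alls n F)

/-- Guard a formula by a list of equations. -/
def guards (Qs : List (Tm × Tm)) (B : Fm) : Fm :=
  Qs.foldr (fun q F => .imp (.eq q.1 q.2) F) B

/-- Size of a term. -/
def tmSize : Tm → Nat
  | .var _ => 1
  | .app _ ts => 1 + (ts.attach.map (fun t => tmSize t.1)).sum
  decreasing_by have := List.sizeOf_lt_of_mem t.2; simp_wf; omega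

lemma tmSize_app (f : Nat) (ts : List Tm) :
    tmSize (.app f ts) = 1 + (ts.map tmSize).sum := by
  rw [tmSize]
  congr 1
  rw [List.attach_map_val]

lemma subst_app (σ : Nat → Tm) (f : Nat) (ts : List Tm) :
    (Tm.app f ts).subst σ = .app f (ts.map (Tm.subst σ)) := by
  rw [Tm.subst]
  congr 1
  rw [List.attach_map_val]

lemma tmSize_lt_of_mem {s : Tm} {f : Nat} {ts : List Tm} (h : s ∈ ts) :
    tmSize s < tmSize (.app f ts) := by
  rw [tmSize_app]
  have := List.single_le_sum (l := ts.map tmSize) (fun _ _ => Nat.zero_le _)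
    (tmSize s) (List.mem_map_of_mem h)
  omega

lemma tmSize_subst_lt {s t : Tm} (h : RigidSub s t) (σ : Nat → Tm) :
    tmSize (s.subst σ) < tmSize (t.subst σ) := by
  induction h with
  | single h =>
    obtain ⟨hmem⟩ := h
    rw [subst_app]
    exact tmSize_lt_of_mem (List.mem_map_of_mem hmem)
  | tail _ h ih =>
    obtain ⟨hmem⟩ := h
    refine ih.trans ?_
    rw [subst_app]
    exact tmSize_lt_of_mem (List.mem_map_of_mem hmem)

lemma no_unifier {s t : Tm} (h : RigidSub s t) (σ : Nat → Tm) :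
    ¬ Unifies σ s t := fun hu => by
  have := tmSize_subst_lt h σ
  rw [hu] at this
  omega

lemma prv_of_no_unifier {s t : Tm} (hnu : ∀ σ, ¬ Unifies σ s t)
    {Γ : List Fm} {C : Fm} (h : Fm.eq s t ∈ Γ) : Prv Γ C := by
  refine Prv.eqL (U := ∅) h ⟨?_, ?_⟩ ?_
  · intro σ hσ; exact absurd hσ (Set.notMem_empty σ)
  · intro θ hθ; exact absurd hθ (hnu θ)
  · intro σ hσ; exact absurd hσ (Set.notMem_empty σ)

lemma prv_guards_mem {s t : Tm} (hnu : ∀ σ, ¬ Unifies σ s t)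
    {Γ : List Fm} (hmem : Fm.eq s t ∈ Γ) (Qs : List (Tm × Tm)) (B : Fm) :
    Prv Γ (guards Qs B) := by
  induction Qs generalizing Γ with
  | nil => exact prv_of_no_unifier hnu hmem
  | cons q Qs ih =>
    exact Prv.impR (ih (List.mem_cons_of_mem _ hmem))

lemma prv_guards_main {s t : Tm} (hnu : ∀ σ, ¬ Unifies σ s t)
    (Qs₁ Qs₂ : List (Tm × Tm)) (B : Fm) {Γ : List Fm} :
    Prv Γ (guards (Qs₁ ++ (s, t) :: Qs₂) B) := by
  induction Qs₁ generalizing Γ with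
  | nil =>
    exact Prv.impR (prv_guards_mem hnu (List.mem_cons_self) Qs₂ B)
  | cons q Qs₁ ih => exact Prv.impR ih

lemma prv_alls {F : Fm} (h : Prv [] F) : ∀ m, Prv [] (alls m F)
  | 0 => h
  | m + 1 => Prv.allR (by simpa using prv_alls h m)

/-- the occurs-check reduction step is valid.  If `y` (a
    universally quantified variable, here de Bruijn index `n < m`) is a rigid
    subterm of `t` (so in particular `t ≠ y`), then the guard `y = t` has no
    unifier, and the guarded goal `∀ȳ.(Q₁ → ⋯ → y = t → ⋯ → Qₘ → B)` is
    provable, i.e. equivalent to ⊤. -/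
theorem occurs_check_valid (n : Nat) (t : Tm) (hne : t ≠ .var n)
    (hrig : RigidSub (.var n) t)
    (m : Nat) (hn : n < m) (Qs₁ Qs₂ : List (Tm × Tm)) (B : Fm) :
    (∀ σ : Nat → Tm, ¬ Unifies σ (.var n) t) ∧
    Prv [] (alls m (guards (Qs₁ ++ (Tm.var n, t) :: Qs₂) B)) := by
  have hnu := no_unifier hrig
  exact ⟨hnu, prv_alls (prv_guards_main hnu Qs₁ Qs₂ B) m⟩
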